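/- Let P(s) = \sum_{k=1}^m a_k k^{-s} with a_1 \neq 0, r \in \mathbb{R}, and suppose P has at least one zero with real part strictly greater than r. Then \liminf_{n \to \infty} d_{n,r}^2 \log n = \infty, i.e., d_{n,r} does not tend to 0; in fact d_{n,r} is bounded below by a positive constant independent of n. -/

import Mathlib

open Finset Filter Topology MeasureTheory

/-- `κ_r(x) = ∑_{1 ≤ k ≤ x} a_k k^{-(r-1/2)}` -/
noncomputable def kappa (a : ℕ → ℂ) (r : ℝ) (x : ℝ) : ℂ :=
  ∑ k ∈ Finset.Icc 1 ⌊x⌋₊, a k / (k : ℂ) ^ ((r : ℂ) - 1/2)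

/-- The square of the Báez-Duarte distance `d_{n,r}`: the squared `L²(0,∞)` distance from the
indicator of `(0,1)` to the span of `x ↦ κ_r(1/(kx))`, `k = 1, …, n`. -/
noncomputable def baezDuarteDistSq (a : ℕ → ℂ) (r : ℝ) (n : ℕ) : ℝ :=
  ⨅ b : Fin n → ℂ, ∫ x in Set.Ioi (0 : ℝ),
    ‖Set.indicator (Set.Ioo (0 : ℝ) 1) (fun _ => (1 : ℂ)) x -
      ∑ k : Fin n, b k * kappa a r (1 / (((k : ℕ) + 1 : ℕ) * x))‖ ^ 2

lemma kappa_eq_sum {m : ℕ} {a : ℕ → ℂ} (ha : ∀ k, m < k → a k = 0) (r : ℝ) {y : ℝ}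
    (hy : 0 ≤ y) :
    kappa a r y =
      ∑ j ∈ Finset.Icc 1 m, if (j : ℝ) ≤ y then a j / (j : ℂ) ^ ((r : ℂ) - 1/2) else 0 := by
  have hcond : ∀ j ∈ Finset.Icc 1 m,
      (if (j : ℝ) ≤ y then a j / (j : ℂ) ^ ((r : ℂ) - 1/2) else 0)
        = (if j ≤ ⌊y⌋₊ then a j / (j : ℂ) ^ ((r : ℂ) - 1/2) else 0) := by
    intro j _
    congr 1
    simp [Nat.le_floor_iff hy]
  rw [Finset.sum_congr rfl hcond]
  unfold kappa
  set N := ⌊y⌋₊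
  have h1 : (∑ j ∈ Finset.Icc 1 N, a j / (j : ℂ) ^ ((r : ℂ) - 1/2))
      = ∑ j ∈ Finset.Icc 1 (max N m), if j ≤ N then a j / (j : ℂ) ^ ((r : ℂ) - 1/2) else 0 := by
    rw [← Finset.sum_subset (Finset.Icc_subset_Icc_right (le_max_left N m))
      (fun j hj hnj => ?_)]
    · apply Finset.sum_congr rfl
      intro j hj
      rw [if_pos (Finset.mem_Icc.1 hj).2]
    · rw [if_neg]
      intro hjN
      exact hnj (Finset.mem_Icc.2 ⟨(Finset.mem_Icc.1 hj).1, hjN⟩)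
  have h2 : (∑ j ∈ Finset.Icc 1 m, if j ≤ N then a j / (j : ℂ) ^ ((r : ℂ) - 1/2) else 0)
      = ∑ j ∈ Finset.Icc 1 (max N m), if j ≤ N then a j / (j : ℂ) ^ ((r : ℂ) - 1/2) else 0 := by
    apply Finset.sum_subset (Finset.Icc_subset_Icc_right (le_max_right N m))
    intro j hj hnj
    have hjm : m < j := by
      by_contra h
      exact hnj (Finset.mem_Icc.2 ⟨(Finset.mem_Icc.1 hj).1, not_lt.1 h⟩)
    rw [ha j hjm]
    simp
  rw [h1, h2]

lemma norm_kappa_le {m : ℕ} {a : ℕ → ℂ} (ha : ∀ k, m < k → a k = 0) (r : ℝ) {y : ℝ}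
    (hy : 0 ≤ y) :
    ‖kappa a r y‖ ≤ ∑ j ∈ Finset.Icc 1 m, ‖a j / (j : ℂ) ^ ((r : ℂ) - 1/2)‖ := by
  rw [kappa_eq_sum ha r hy]
  refine (norm_sum_le _ _).trans (Finset.sum_le_sum fun j _ => ?_)
  split_ifs
  · exact le_rfl
  · rw [norm_zero]; exact norm_nonneg _

lemma kappa_measurable (a : ℕ → ℂ) (r : ℝ) : Measurable (kappa a r) := by
  have : kappa a r =
      (fun N : ℕ => ∑ k ∈ Finset.Icc 1 N, a k / (k : ℂ) ^ ((r : ℂ) - 1/2)) ∘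
        (Nat.floor : ℝ → ℕ) := rfl
  rw [this]
  exact measurable_from_top.comp Nat.measurable_floor

lemma key_bound {m : ℕ} {a : ℕ → ℂ} (ha : ∀ k, m < k → a k = 0) {r : ℝ} {ρ : ℂ}
    (hρ0 : (∑ k ∈ Finset.Icc 1 m, a k * (k : ℂ) ^ (-ρ)) = 0) (hρr : r < ρ.re)
    (n : ℕ) (b : Fin n → ℂ) :
    2 * (ρ.re - r) / ‖ρ - (r : ℂ) + 1/2‖ ^ 2 ≤
      ∫ x in Set.Ioi (0 : ℝ),
        ‖Set.indicator (Set.Ioo (0 : ℝ) 1) (fun _ => (1 : ℂ)) x -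
          ∑ k : Fin n, b k * kappa a r (1 / (((k : ℕ) + 1 : ℕ) * x))‖ ^ 2 := by
  set δ : ℝ := ρ.re - r with hδdef
  have hδ : 0 < δ := by simp [hδdef]; linarith
  set s : ℂ := ρ - (r : ℂ) + 1/2 with hsdef
  have hsre : s.re = δ + 1/2 := by
    rw [hsdef, hδdef]
    norm_num [Complex.add_re, Complex.sub_re]
  have hs0 : s ≠ 0 := by
    intro h
    rw [h] at hsre
    simp at hsre
    linarith
  have hs1re : -1 < (s - 1).re := by
    simp [Complex.sub_re, hsre]
    linarith
  have hsabs : 0 < ‖s‖ := by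
    simpa [norm_pos_iff] using hs0
  set f : ℝ → ℂ := fun x =>
    Set.indicator (Set.Ioo (0 : ℝ) 1) (fun _ => (1 : ℂ)) x -
      ∑ k : Fin n, b k * kappa a r (1 / (((k : ℕ) + 1 : ℕ) * x)) with hfdef
  -- measurability
  have hf_meas : Measurable f := by
    apply Measurable.sub
    · exact measurable_const.indicator measurableSet_Ioo
    · apply Finset.measurable_sum
      intro k _
      apply Measurable.const_mul
      apply (kappa_measurable a r).comp
      simp only [one_div]
      exact (measurable_const.mul measurable_id).inv
  -- boundedness
  set B : ℝ := ∑ j ∈ Finset.Icc 1 m, ‖a j / (j : ℂ) ^ ((r : ℂ) - 1/2)‖ with hBdef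
  have hB0 : 0 ≤ B := Finset.sum_nonneg fun j _ => norm_nonneg _
  set C : ℝ := 1 + ∑ k : Fin n, ‖b k‖ * B with hCdef
  have hC0 : 0 ≤ C := by
    have : 0 ≤ ∑ k : Fin n, ‖b k‖ * B :=
      Finset.sum_nonneg fun k _ => mul_nonneg (norm_nonneg _) hB0
    rw [hCdef]; linarith
  have hf_bound : ∀ x : ℝ, 0 < x → ‖f x‖ ≤ C := by
    intro x hx
    have h1 : ‖Set.indicator (Set.Ioo (0 : ℝ) 1) (fun _ => (1 : ℂ)) x‖ ≤ 1 := by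
      by_cases hmem : x ∈ Set.Ioo (0 : ℝ) 1 <;> simp [hmem]
    have h2 : ‖∑ k : Fin n, b k * kappa a r (1 / (((k : ℕ) + 1 : ℕ) * x))‖ ≤
        ∑ k : Fin n, ‖b k‖ * B := by
      refine (norm_sum_le _ _).trans (Finset.sum_le_sum fun k _ => ?_)
      rw [norm_mul]
      refine mul_le_mul_of_nonneg_left ?_ (norm_nonneg _)
      apply norm_kappa_le ha
      positivity
    calc ‖f x‖ ≤ ‖Set.indicator (Set.Ioo (0 : ℝ) 1) (fun _ => (1 : ℂ)) x‖ +
        ‖∑ k : Fin n, b k * kappa a r (1 / (((k : ℕ) + 1 : ℕ) * x))‖ := norm_sub_le _ _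
      _ ≤ C := by rw [hCdef]; linarith
  -- f vanishes beyond 1
  have hf_zero : ∀ x : ℝ, 1 < x → f x = 0 := by
    intro x hx
    have hind : Set.indicator (Set.Ioo (0 : ℝ) 1) (fun _ => (1 : ℂ)) x = 0 := by
      apply Set.indicator_of_notMem
      simp [Set.mem_Ioo]
      intro h; linarith
    have hκ : ∀ k : Fin n, kappa a r (1 / (((k : ℕ) + 1 : ℕ) * x)) = 0 := by
      intro k
      have hK1 : (1 : ℝ) ≤ ((k : ℕ) + 1 : ℕ) := by exact_mod_cast Nat.succ_le_succ (Nat.zero_le _)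
      have hKx : 1 < ((k : ℕ) + 1 : ℕ) * x := by nlinarith
      have hfl : ⌊(1 / (((k : ℕ) + 1 : ℕ) * x) : ℝ)⌋₊ = 0 := by
        apply Nat.floor_eq_zero.2
        rw [div_lt_one (by linarith)]
        linarith
      unfold kappa
      rw [hfl]
      simp
    have hsum : (∑ k : Fin n, b k * kappa a r (1 / (((k : ℕ) + 1 : ℕ) * x))) = 0 :=
      Finset.sum_eq_zero fun k _ => by rw [hκ k, mul_zero]
    simp only [hfdef]
    rw [hind, hsum, sub_zero]
  -- finite measure instance
  haveI hfin : IsFiniteMeasure (volume.restrict (Set.Ioo (0 : ℝ) 1)) := by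
    constructor
    rw [Measure.restrict_apply_univ, Real.volume_Ioo]
    exact ENNReal.ofReal_lt_top
  -- f is Memℒp 2 on Ioo 0 1
  have hf_mem : MemLp f 2 (volume.restrict (Set.Ioo (0 : ℝ) 1)) := by
    apply MemLp.of_bound hf_meas.aestronglyMeasurable C
    filter_upwards [ae_restrict_mem measurableSet_Ioo] with x hx
    exact hf_bound x hx.1
  -- the weight g
  set g : ℝ → ℂ := fun x => (x : ℂ) ^ (s - 1) with hgdef
  have hg_meas : Measurable g := by
    apply Measurable.pow
    · exact Complex.measurable_ofReal
    · exact measurable_const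
  -- ‖g‖² on Ioo 0 1
  have hg_norm : ∀ x : ℝ, 0 < x → ‖g x‖ ^ 2 = x ^ (2 * δ - 1) := by
    intro x hx
    rw [hgdef]
    simp only
    rw [Complex.norm_cpow_eq_rpow_re_of_pos hx]
    rw [← Real.rpow_natCast (x ^ ((s - 1).re)) 2, ← Real.rpow_mul hx.le]
    congr 1
    simp [Complex.sub_re, hsre]
    ring
  have hrpow_int : IntegrableOn (fun x : ℝ => x ^ (2 * δ - 1)) (Set.Ioo (0 : ℝ) 1) := by
    have h := intervalIntegral.intervalIntegrable_rpow' (a := 0) (b := 1)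
      (r := 2 * δ - 1) (by linarith)
    rw [intervalIntegrable_iff_integrableOn_Ioc_of_le (by norm_num)] at h
    exact h.mono_set Set.Ioo_subset_Ioc_self
  have hg_sq_int : Integrable (fun x : ℝ => ‖g x‖ ^ 2)
      (volume.restrict (Set.Ioo (0 : ℝ) 1)) := by
    apply Integrable.congr hrpow_int
    filter_upwards [ae_restrict_mem measurableSet_Ioo] with x hx
    exact (hg_norm x hx.1).symm
  have hg_mem : MemLp g 2 (volume.restrict (Set.Ioo (0 : ℝ) 1)) := by
    rw [memLp_two_iff_integrable_sq_norm hg_meas.aestronglyMeasurable]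
    exact hg_sq_int
  have hg_int : IntegrableOn g (Set.Ioo (0 : ℝ) 1) := by
    have h := intervalIntegral.intervalIntegrable_cpow' (a := 0) (b := 1) hs1re
    rw [intervalIntegrable_iff_integrableOn_Ioc_of_le (by norm_num)] at h
    exact h.mono_set Set.Ioo_subset_Ioc_self
  -- ∫ over Ioo 0 1 of g-squared
  have hg_sq_eval : ∫ x in Set.Ioo (0 : ℝ) 1, ‖g x‖ ^ 2 = 1 / (2 * δ) := by
    rw [setIntegral_congr_fun measurableSet_Ioo (fun x hx => hg_norm x hx.1)]
    rw [← MeasureTheory.integral_Ioc_eq_integral_Ioo,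
      ← intervalIntegral.integral_of_le (by norm_num : (0:ℝ) ≤ 1)]
    rw [integral_rpow (Or.inl (by linarith))]
    rw [sub_add_cancel, Real.one_rpow,
      Real.zero_rpow (by positivity : (0:ℝ) < 2 * δ).ne']
    norm_num
  -- helper : integral of indicator pieces
  have helper : ∀ t : ℝ, 0 < t → t ≤ 1 →
      ∫ x in Set.Ioo (0 : ℝ) 1, (Set.Iic t).indicator g x = (t : ℂ) ^ s / s := by
    intro t ht ht1
    rw [setIntegral_indicator measurableSet_Iic]
    have hae : (Set.Ioo (0 : ℝ) 1 ∩ Set.Iic t : Set ℝ) =ᵐ[volume] (Set.Ioc 0 t : Set ℝ) := by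
      rw [MeasureTheory.ae_eq_set]
      constructor
      · refine measure_mono_null (fun x hx => ?_) (measure_empty (μ := volume))
        exact absurd (Set.mem_Ioc.mpr ⟨hx.1.1.1, hx.1.2⟩) hx.2
      · refine measure_mono_null (fun x hx => ?_) (measure_singleton (1 : ℝ))
        obtain ⟨hx1, hnot⟩ := hx
        obtain ⟨hx0, hxt⟩ := Set.mem_Ioc.mp hx1
        have h1le : (1 : ℝ) ≤ x := by
          by_contra hlt
          push_neg at hlt
          exact hnot ⟨⟨hx0, hlt⟩, hxt⟩
        exact Set.mem_singleton_iff.2 (le_antisymm (hxt.trans ht1) h1le)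
    rw [setIntegral_congr_set hae]
    rw [← intervalIntegral.integral_of_le ht.le]
    simp only [hgdef]
    rw [integral_cpow (Or.inl hs1re)]
    rw [sub_add_cancel, Complex.ofReal_zero, Complex.zero_cpow hs0]
    simp
  -- the Mellin-type evaluation
  have hM : ∫ x in Set.Ioo (0 : ℝ) 1, f x * g x = 1 / s := by
    have hptwise : ∀ x ∈ Set.Ioo (0 : ℝ) 1, f x * g x =
        g x - ∑ k : Fin n, ∑ j ∈ Finset.Icc 1 m,
          (b k * (a j / (j : ℂ) ^ ((r : ℂ) - 1/2))) *
            (Set.Iic ((1 : ℝ) / ((((k : ℕ) + 1 : ℕ) : ℝ) * j))).indicator g x := by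
      rintro x ⟨hx0, hx1⟩
      have hind : Set.indicator (Set.Ioo (0 : ℝ) 1) (fun _ => (1 : ℂ)) x = 1 :=
        Set.indicator_of_mem (Set.mem_Ioo.mpr ⟨hx0, hx1⟩) _
      have hκ : ∀ k : Fin n, kappa a r (1 / ((((k : ℕ) + 1 : ℕ) : ℝ) * x)) =
          ∑ j ∈ Finset.Icc 1 m,
            if (j : ℝ) ≤ 1 / ((((k : ℕ) + 1 : ℕ) : ℝ) * x) then
              a j / (j : ℂ) ^ ((r : ℂ) - 1/2) else 0 := by
        intro k
        apply kappa_eq_sum ha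
        positivity
      simp only [hfdef]
      rw [hind]
      rw [sub_mul, one_mul, Finset.sum_mul]
      congr 1
      apply Finset.sum_congr rfl
      intro k _
      rw [hκ k, mul_assoc, Finset.sum_mul, Finset.mul_sum]
      apply Finset.sum_congr rfl
      intro j hj
      have hj1 : 1 ≤ j := (Finset.mem_Icc.1 hj).1
      have hjpos : (0 : ℝ) < j := by exact_mod_cast hj1
      have hK : (0 : ℝ) < ((((k : ℕ) + 1 : ℕ)) : ℝ) := by
        exact_mod_cast Nat.succ_pos (k : ℕ)
      have hcond : ((j : ℝ) ≤ 1 / (((((k : ℕ) + 1 : ℕ)) : ℝ) * x)) ↔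
          (x ≤ 1 / (((((k : ℕ) + 1 : ℕ)) : ℝ) * j)) := by
        rw [le_div_iff₀ (mul_pos hK hx0), le_div_iff₀ (mul_pos hK hjpos)]
        constructor <;> intro h <;> nlinarith
      rw [Set.indicator_apply]
      simp only [Set.mem_Iic]
      by_cases h : (j : ℝ) ≤ 1 / (((((k : ℕ) + 1 : ℕ)) : ℝ) * x)
      · rw [if_pos h, if_pos (hcond.1 h)]; ring
      · rw [if_neg h, if_neg (fun hh => h (hcond.2 hh))]; ring
    rw [setIntegral_congr_fun measurableSet_Ioo hptwise]
    have hind_int : ∀ (k : Fin n) (j : ℕ), IntegrableOn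
        (fun x => (b k * (a j / (j : ℂ) ^ ((r : ℂ) - 1/2))) *
          (Set.Iic ((1 : ℝ) / ((((k : ℕ) + 1 : ℕ) : ℝ) * j))).indicator g x)
        (Set.Ioo (0 : ℝ) 1) := by
      intro k j
      exact (hg_int.indicator measurableSet_Iic).const_mul _
    rw [integral_sub hg_int (integrable_finset_sum _ (fun k _ =>
      integrable_finset_sum _ (fun j _ => hind_int k j)))]
    rw [integral_finset_sum _ (fun k _ => integrable_finset_sum _ (fun j _ => hind_int k j))]
    have hgval : ∫ x in Set.Ioo (0 : ℝ) 1, g x = 1 / s := by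
      have h1 := helper 1 one_pos le_rfl
      rw [Complex.ofReal_one, Complex.one_cpow] at h1
      rw [← h1]
      apply setIntegral_congr_fun measurableSet_Ioo
      rintro x ⟨hx0, hx1⟩
      rw [Set.indicator_of_mem (Set.mem_Iic.2 hx1.le)]
    rw [hgval]
    have hzero : ∀ k : Fin n, (∑ j ∈ Finset.Icc 1 m,
        ∫ x in Set.Ioo (0 : ℝ) 1, (b k * (a j / (j : ℂ) ^ ((r : ℂ) - 1/2))) *
          (Set.Iic ((1 : ℝ) / ((((k : ℕ) + 1 : ℕ) : ℝ) * j))).indicator g x) = 0 := by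
      intro k
      set K : ℕ := (k : ℕ) + 1 with hKdef
      have hK1 : 1 ≤ K := Nat.succ_le_succ (Nat.zero_le _)
      have hKpos : (0 : ℝ) < K := by exact_mod_cast hK1
      have hterm : ∀ j ∈ Finset.Icc 1 m,
          (∫ x in Set.Ioo (0 : ℝ) 1, (b k * (a j / (j : ℂ) ^ ((r : ℂ) - 1/2))) *
            (Set.Iic ((1 : ℝ) / ((K : ℝ) * j))).indicator g x)
          = (b k * ((K : ℂ) ^ s)⁻¹ / s) * (a j * (j : ℂ) ^ (-ρ)) := by
        intro j hj
        have hj1 : 1 ≤ j := (Finset.mem_Icc.1 hj).1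
        have hjpos : (0 : ℝ) < j := by exact_mod_cast hj1
        have hjC : ((j : ℕ) : ℂ) ≠ 0 := Nat.cast_ne_zero.2 (by omega)
        have hK1' : (1 : ℝ) ≤ (K : ℝ) := by exact_mod_cast hK1
        have hKj : (0 : ℝ) < (K : ℝ) * j := mul_pos (by linarith) hjpos
        have ht : (0 : ℝ) < 1 / ((K : ℝ) * j) := div_pos one_pos hKj
        have ht1 : (1 : ℝ) / ((K : ℝ) * j) ≤ 1 := by
          rw [div_le_one hKj]
          have hj' : (1 : ℝ) ≤ (j : ℝ) := by exact_mod_cast hj1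
          nlinarith
        rw [integral_const_mul, helper _ ht ht1]
        -- now compute the cpow
        have hcast : ((1 / ((K : ℝ) * (j : ℝ)) : ℝ) : ℂ) = (((K : ℝ) : ℂ) * ((j : ℝ) : ℂ))⁻¹ := by
          push_cast
          rw [one_div]
        have harg : ((((K : ℝ) : ℂ)) * ((j : ℝ) : ℂ)).arg ≠ Real.pi := by
          rw [← Complex.ofReal_mul, Complex.arg_ofReal_of_nonneg hKj.le]
          exact fun h => Real.pi_ne_zero h.symm
        have hpow : ((1 / ((K : ℝ) * (j : ℝ)) : ℝ) : ℂ) ^ s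
            = ((K : ℂ) ^ s)⁻¹ * ((j : ℂ) ^ s)⁻¹ := by
          rw [hcast, Complex.inv_cpow _ _ harg,
            Complex.mul_cpow_ofReal_nonneg (by linarith : (0:ℝ) ≤ (K : ℝ)) hjpos.le, mul_inv]
          push_cast
          ring
        rw [hpow]
        have hjpow : ((j : ℂ)) ^ (-ρ) =
            (((j : ℂ)) ^ ((r : ℂ) - 1/2))⁻¹ * (((j : ℂ)) ^ s)⁻¹ := by
          rw [← mul_inv, ← Complex.cpow_add _ _ hjC, Complex.cpow_neg]
          congr 2
          rw [hsdef]; ring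
        rw [hjpow]
        ring
      rw [Finset.sum_congr rfl hterm, ← Finset.mul_sum, hρ0, mul_zero]
    have hzero' : (∑ k : Fin n, ∫ x in Set.Ioo (0 : ℝ) 1, ∑ j ∈ Finset.Icc 1 m,
        (b k * (a j / (j : ℂ) ^ ((r : ℂ) - 1/2))) *
          (Set.Iic ((1 : ℝ) / ((((k : ℕ) + 1 : ℕ) : ℝ) * j))).indicator g x) = 0 := by
      apply Finset.sum_eq_zero
      intro k _
      rw [integral_finset_sum _ (fun j _ => hind_int k j)]
      exact hzero k
    rw [hzero', sub_zero]
  -- Cauchy–Schwarz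
  have hpq : Real.HolderConjugate 2 2 := Real.HolderConjugate.two_two
  have h2 : (ENNReal.ofReal (2 : ℝ)) = 2 := by
    rw [ENNReal.ofReal_ofNat]
  have hf_mem' : MemLp f (ENNReal.ofReal 2) (volume.restrict (Set.Ioo (0 : ℝ) 1)) := by
    rw [h2]; exact hf_mem
  have hg_mem' : MemLp g (ENNReal.ofReal 2) (volume.restrict (Set.Ioo (0 : ℝ) 1)) := by
    rw [h2]; exact hg_mem
  have hCS := integral_mul_norm_le_Lp_mul_Lq (μ := volume.restrict (Set.Ioo (0 : ℝ) 1))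
    hpq hf_mem' hg_mem'
  have hnormM : ‖(1 : ℂ) / s‖ = 1 / ‖s‖ := by
    rw [norm_div]
    simp
  have hstep1 : 1 / ‖s‖ ≤
      ∫ x in Set.Ioo (0 : ℝ) 1, ‖f x‖ * ‖g x‖ := by
    rw [← hnormM, ← hM]
    refine (norm_integral_le_integral_norm _).trans_eq ?_
    apply integral_congr_ae
    filter_upwards with x
    rw [norm_mul]
  set A : ℝ := ∫ x in Set.Ioo (0 : ℝ) 1, ‖f x‖ ^ 2 with hAdef
  have hA0 : 0 ≤ A := integral_nonneg fun x => by positivity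
  have hrw2 : ∀ h : ℝ → ℂ, (∫ x in Set.Ioo (0 : ℝ) 1, ‖h x‖ ^ (2 : ℝ))
      = ∫ x in Set.Ioo (0 : ℝ) 1, ‖h x‖ ^ 2 := by
    intro h
    apply integral_congr_ae
    filter_upwards with x
    rw [← Real.rpow_natCast (‖h x‖) 2]
    norm_num
  have hstep2 : 1 / ‖s‖ ≤ Real.sqrt A * Real.sqrt (1 / (2 * δ)) := by
    refine hstep1.trans (hCS.trans_eq ?_)
    rw [hrw2 f, hrw2 g, hg_sq_eval, ← hAdef]
    rw [Real.sqrt_eq_rpow, Real.sqrt_eq_rpow]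
  rw [← Real.sqrt_mul hA0] at hstep2
  have hy0 : (0:ℝ) ≤ A * (1 / (2 * δ)) := mul_nonneg hA0 (by positivity)
  have hsq : (1 / ‖s‖) ^ 2 ≤ A * (1 / (2 * δ)) :=
    (Real.le_sqrt (by positivity) hy0).1 hstep2
  have hAbound : 2 * δ / ‖s‖ ^ 2 ≤ A := by
    rw [div_pow, one_pow, mul_one_div] at hsq
    rw [div_le_div_iff₀ (by positivity) (by linarith)] at hsq
    rw [div_le_iff₀ (by positivity)]
    linarith
  -- extend from Ioo 0 1 to Ioi 0
  have hf_sq_int : IntegrableOn (fun x => ‖f x‖ ^ 2) (Set.Ioi (0 : ℝ)) := by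
    have hIoc : IntegrableOn (fun x => ‖f x‖ ^ 2) (Set.Ioc (0 : ℝ) 1) := by
      haveI : IsFiniteMeasure (volume.restrict (Set.Ioc (0 : ℝ) 1)) := by
        constructor
        rw [Measure.restrict_apply_univ, Real.volume_Ioc]
        exact ENNReal.ofReal_lt_top
      apply Integrable.mono' (g := fun _ => C ^ 2)
        (integrable_const _) ((hf_meas.norm.pow_const 2).aestronglyMeasurable)
      filter_upwards [ae_restrict_mem measurableSet_Ioc] with x hx
      rw [Real.norm_eq_abs, abs_of_nonneg (by positivity)]
      exact pow_le_pow_left₀ (norm_nonneg _) (hf_bound x hx.1) 2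
    have heq : Set.EqOn (fun x => ‖f x‖ ^ 2) (fun _ => (0 : ℝ)) (Set.Ioi (1 : ℝ)) := by
      intro x hx
      simp [hf_zero x hx]
    have hIoi1 : IntegrableOn (fun x => ‖f x‖ ^ 2) (Set.Ioi (1 : ℝ)) :=
      (integrableOn_congr_fun heq measurableSet_Ioi).mpr integrableOn_zero
    have := hIoc.union hIoi1
    rwa [Set.Ioc_union_Ioi_eq_Ioi (by norm_num : (0:ℝ) ≤ 1)] at this
  have hmono : A ≤ ∫ x in Set.Ioi (0 : ℝ), ‖f x‖ ^ 2 := by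
    apply setIntegral_mono_set hf_sq_int
    · filter_upwards with x
      positivity
    · exact HasSubset.Subset.eventuallyLE Set.Ioo_subset_Ioi_self
  exact hAbound.trans hmono

theorem baezDuarte_dist_not_tendsto_zero_of_zero (m : ℕ) (hm : 1 ≤ m) (a : ℕ → ℂ)
    (ha1 : a 1 ≠ 0) (ha : ∀ k, m < k → a k = 0) (r : ℝ)
    (hρ : ∃ ρ : ℂ, (∑ k ∈ Finset.Icc 1 m, a k * (k : ℂ) ^ (-ρ)) = 0 ∧ r < ρ.re) :
    Filter.liminf
        (fun n : ℕ => ((baezDuarteDistSq a r n * Real.log n : ℝ) : EReal)) atTop = ⊤ ∧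
      ∃ c > (0 : ℝ), ∀ n : ℕ, c ≤ Real.sqrt (baezDuarteDistSq a r n) := by
  obtain ⟨ρ, hρ0, hρr⟩ := hρ
  set c2 : ℝ := 2 * (ρ.re - r) / ‖ρ - (r : ℂ) + 1/2‖ ^ 2 with hc2def
  have hsre : (ρ - (r : ℂ) + 1/2).re = (ρ.re - r) + 1/2 := by
    norm_num [Complex.add_re, Complex.sub_re]
  have hs0 : (ρ - (r : ℂ) + 1/2) ≠ 0 := by
    intro h
    rw [h] at hsre
    simp at hsre
    linarith
  have habs : 0 < ‖ρ - (r : ℂ) + 1/2‖ := by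
    simpa [norm_pos_iff] using hs0
  have hc2 : 0 < c2 := by
    rw [hc2def]
    apply div_pos (by linarith) (by positivity)
  have hlow : ∀ n, c2 ≤ baezDuarteDistSq a r n := by
    intro n
    apply le_ciInf
    intro b
    exact key_bound ha hρ0 hρr n b
  constructor
  · have hlog : ∀ n : ℕ, 0 ≤ Real.log n := by
      intro n
      rcases Nat.eq_zero_or_pos n with h | h
      · simp [h]
      · apply Real.log_nonneg
        exact_mod_cast h
    have h1 : Tendsto (fun n : ℕ => c2 * Real.log n) atTop atTop := by
      apply Tendsto.const_mul_atTop hc2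
      exact Real.tendsto_log_atTop.comp tendsto_natCast_atTop_atTop
    have h2 : Tendsto (fun n : ℕ => baezDuarteDistSq a r n * Real.log n) atTop atTop := by
      apply tendsto_atTop_mono (fun n => ?_) h1
      exact mul_le_mul_of_nonneg_right (hlow n) (hlog n)
    have h3 : Tendsto (fun n : ℕ =>
        ((baezDuarteDistSq a r n * Real.log n : ℝ) : EReal)) atTop (𝓝 ⊤) := by
      rw [EReal.tendsto_nhds_top_iff_real]
      intro x
      filter_upwards [h2.eventually_gt_atTop x] with n hn
      exact_mod_cast hn
    exact h3.liminf_eq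
  · refine ⟨Real.sqrt c2, Real.sqrt_pos.2 hc2, fun n => ?_⟩
    exact Real.sqrt_le_sqrt (hlow n)
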